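/- Suppose a graph G on n ≥ 5 vertices has a fractional weak r-neighborhood cover (𝒳, f) with degree d and spread s. Then G has a (non-fractional) weak r-neighborhood cover 𝒴 ⊆ 𝒳 (as a multiset of clusters from 𝒳) with degree at most 36·ln(n)·d and spread s. -/

import Mathlib

open scoped Classical

variable {V : Type*}

/-- `x` lies in the closed `r`-ball around `c` in `G`. -/
def inBall (G : SimpleGraph V) (c : V) (r : ℕ) (x : V) : Prop :=
  ∃ p : G.Walk c x, p.length ≤ r

/-- A fractional weak `r`-neighborhood cover of `G` with degree `d` and spread
`s`, given as an indexed family of clusters `X` with weights `f`. -/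
def IsFracWeakCover (G : SimpleGraph V) [Fintype V] (r s : ℕ) (d : ℝ)
    {I : Type*} [Fintype I] (X : I → Set V) (f : I → ℝ) : Prop :=
  (∀ i, 0 ≤ f i ∧ f i ≤ 1) ∧
  (∀ i, ∃ c, ∀ x ∈ X i, inBall G c s x) ∧
  (∀ v : V, 1 ≤ ∑ i ∈ Finset.univ.filter
      (fun i => ∀ x, inBall G v r x → x ∈ X i), f i) ∧
  (∀ v : V, ∑ i ∈ Finset.univ.filter (fun i => v ∈ X i), f i ≤ d)



lemma sum_prod_bool {E : Type*} [Fintype E] [DecidableEq E] (g : E → Bool → ℝ) :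
    (∑ ω : E → Bool, ∏ e, g e (ω e)) = ∏ e, (g e false + g e true) := by
  classical
  have := (Fintype.prod_sum (fun (e : E) (b : Bool) => g e b)).symm
  rw [this]
  exact Finset.prod_congr rfl fun e _ => by rw [Fintype.sum_bool]; ring

lemma chernoff_core {E : Type*} [Fintype E] [DecidableEq E] (w h : E → Bool → ℝ)
    (hw : ∀ e b, 0 ≤ w e b) (hh : ∀ e b, 0 ≤ h e b)
    (p : (E → Bool) → Prop) [DecidablePred p] (c : ℝ)
    (hp : ∀ ω, p ω → c ≤ ∏ e, h e (ω e)) :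
    c * ∑ ω ∈ Finset.univ.filter p, ∏ e, w e (ω e) ≤
      ∏ e, (w e false * h e false + w e true * h e true) := by
  classical
  calc c * ∑ ω ∈ Finset.univ.filter p, ∏ e, w e (ω e)
      = ∑ ω ∈ Finset.univ.filter p, c * ∏ e, w e (ω e) := Finset.mul_sum _ _ _
    _ ≤ ∑ ω ∈ Finset.univ.filter p, ∏ e, (w e (ω e) * h e (ω e)) := by
        apply Finset.sum_le_sum
        intro ω hω
        have hpω : p ω := (Finset.mem_filter.mp hω).2
        have h2 : (0:ℝ) ≤ ∏ e, w e (ω e) :=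
          Finset.prod_nonneg fun e _ => hw e (ω e)
        calc c * ∏ e, w e (ω e) ≤ (∏ e, h e (ω e)) * ∏ e, w e (ω e) :=
              mul_le_mul_of_nonneg_right (hp ω hpω) h2
          _ = ∏ e, (w e (ω e) * h e (ω e)) := by
              rw [← Finset.prod_mul_distrib]
              exact Finset.prod_congr rfl fun e _ => mul_comm _ _
    _ ≤ ∑ ω : E → Bool, ∏ e, (w e (ω e) * h e (ω e)) := by
        apply Finset.sum_le_sum_of_subset_of_nonneg (Finset.filter_subset _ _)
        intro ω _ _
        exact Finset.prod_nonneg fun e _ => mul_nonneg (hw e (ω e)) (hh e (ω e))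
    _ = ∏ e, (w e false * h e false + w e true * h e true) :=
        sum_prod_bool (fun e b => w e b * h e b)

lemma sum_prod_filter_fst {I : Type*} [Fintype I] {T : ℕ} (A : Finset I) (g : I × Fin T → ℝ) :
    ∑ e ∈ Finset.univ.filter (fun e : I × Fin T => e.1 ∈ A), g e
      = ∑ i ∈ A, ∑ t : Fin T, g (i, t) := by
  rw [show Finset.univ.filter (fun e : I × Fin T => e.1 ∈ A) = A ×ˢ Finset.univ from by
    ext ⟨i, t⟩; simp]
  rw [Finset.sum_product]

lemma exp_two_fifths_le : Real.exp (2/5) ≤ 3/2 := by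
  have h1 : Real.exp 1 < 2.7182818286 := Real.exp_one_lt_d9
  have h0 : (0:ℝ) ≤ Real.exp 1 := (Real.exp_pos 1).le
  have h5 : Real.exp (2/5) ^ 5 ≤ (3/2:ℝ) ^ 5 := by
    have e1 : Real.exp (2/5) ^ 5 = Real.exp 1 ^ 2 := by
      rw [← Real.exp_nat_mul, ← Real.exp_nat_mul]; norm_num
    rw [e1]
    calc Real.exp 1 ^ 2 ≤ (2.7182818286:ℝ) ^ 2 := pow_le_pow_left₀ h0 h1.le 2
      _ ≤ (3/2:ℝ) ^ 5 := by norm_num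
  exact le_of_pow_le_pow_left₀ (by norm_num) (by norm_num) h5

set_option maxHeartbeats 1000000 in
lemma tailA {I : Type*} [Fintype I] {T : ℕ} (f : I → ℝ) (hf01 : ∀ i, 0 ≤ f i ∧ f i ≤ 1)
    (A : Finset I) (d a : ℝ) (hd : ∑ i ∈ A, f i ≤ d) (hd0 : 0 ≤ d) :
    ∑ ω ∈ Finset.univ.filter (fun ω : (I × Fin T) → Bool =>
        a < ∑ e ∈ Finset.univ.filter (fun e : I × Fin T => e.1 ∈ A),
          (if ω e then (1:ℝ) else 0)),
      ∏ e, (if ω e then f e.1 else 1 - f e.1)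
      ≤ Real.exp ((T:ℝ) * d / 2 - (2/5) * a) := by
  have hw : ∀ (e : I × Fin T) (b : Bool),
      (0:ℝ) ≤ (if b then f e.1 else 1 - f e.1) := by
    intro e b; cases b
    · simpa using by linarith [(hf01 e.1).2]
    · simpa using (hf01 e.1).1
  have hh : ∀ (e : I × Fin T) (b : Bool),
      (0:ℝ) ≤ (if e.1 ∈ A then Real.exp ((2/5) * (if b then 1 else 0)) else 1) := by
    intro e b
    by_cases hA : e.1 ∈ A
    · simp only [hA, if_true]; exact (Real.exp_pos _).le
    · simp only [hA, if_false]; norm_num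
  have hp : ∀ ω : (I × Fin T) → Bool,
      (a < ∑ e ∈ Finset.univ.filter (fun e : I × Fin T => e.1 ∈ A),
          (if ω e then (1:ℝ) else 0)) →
      Real.exp ((2/5) * a) ≤
        ∏ e, (if e.1 ∈ A then Real.exp ((2/5) * (if ω e then (1:ℝ) else 0)) else 1) := by
    intro ω hω
    have h1 : ∏ e, (if e.1 ∈ A then Real.exp ((2/5) * (if ω e then (1:ℝ) else 0)) else 1)
        = Real.exp ((2/5) * ∑ e ∈ Finset.univ.filter (fun e : I × Fin T => e.1 ∈ A),
            (if ω e then (1:ℝ) else 0)) := by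
      rw [Finset.mul_sum, Real.exp_sum, Finset.prod_filter]
    rw [h1]
    apply Real.exp_le_exp.mpr
    have : (0:ℝ) ≤ 2/5 := by norm_num
    nlinarith
  have hcc := chernoff_core
    (fun (e : I × Fin T) b => if b then f e.1 else 1 - f e.1)
    (fun (e : I × Fin T) b => if e.1 ∈ A then Real.exp ((2/5) * (if b then 1 else 0)) else 1)
    hw hh
    (fun ω => a < ∑ e ∈ Finset.univ.filter (fun e : I × Fin T => e.1 ∈ A),
      (if ω e then (1:ℝ) else 0))
    (Real.exp ((2/5) * a)) hp
  -- bound the RHS product of hcc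
  have hprod : (∏ e : I × Fin T,
      ((if (false : Bool) then f e.1 else 1 - f e.1) *
         (if e.1 ∈ A then Real.exp ((2/5) * (if (false : Bool) then (1:ℝ) else 0)) else 1) +
       (if (true : Bool) then f e.1 else 1 - f e.1) *
         (if e.1 ∈ A then Real.exp ((2/5) * (if (true : Bool) then (1:ℝ) else 0)) else 1)))
      ≤ Real.exp ((T:ℝ) * d / 2) := by
    calc (∏ e : I × Fin T, _)
        ≤ ∏ e : I × Fin T, Real.exp (if e.1 ∈ A then f e.1 / 2 else 0) := by
          apply Finset.prod_le_prod
          · intro e _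
            have h1 := (hf01 e.1).1; have h2 := (hf01 e.1).2
            have h3 := Real.exp_pos ((2:ℝ)/5 * 1)
            by_cases hA : e.1 ∈ A <;>
              simp only [hA, if_true, if_false, Bool.false_eq_true, mul_zero, mul_one,
                Real.exp_zero] <;> nlinarith
          · intro e _
            have h1 := (hf01 e.1).1; have h2 := (hf01 e.1).2
            have he2 : f e.1 / 2 + 1 ≤ Real.exp (f e.1 / 2) := Real.add_one_le_exp _
            have he : Real.exp ((2:ℝ)/5 * 1) ≤ 3/2 := by
              rw [mul_one]; exact exp_two_fifths_le
            by_cases hA : e.1 ∈ A <;>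
              simp only [hA, if_true, if_false, Bool.false_eq_true, mul_zero, mul_one,
                Real.exp_zero] <;> nlinarith
      _ = Real.exp (∑ e : I × Fin T, if e.1 ∈ A then f e.1 / 2 else 0) :=
          (Real.exp_sum _ _).symm
      _ ≤ Real.exp ((T:ℝ) * d / 2) := by
          apply Real.exp_le_exp.mpr
          have : ∑ e : I × Fin T, (if e.1 ∈ A then f e.1 / 2 else 0)
              = (T:ℝ) * ((∑ i ∈ A, f i) / 2) := by
            rw [← Finset.sum_filter, sum_prod_filter_fst A (fun e => f e.1 / 2)]
            simp only [Finset.sum_const, Finset.card_univ, Fintype.card_fin, nsmul_eq_mul]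
            rw [← Finset.mul_sum, ← Finset.sum_div]
          rw [this]
          have : (0:ℝ) ≤ (T:ℝ) := by positivity
          nlinarith [hd]
  -- combine
  have hcpos : (0:ℝ) < Real.exp ((2/5) * a) := Real.exp_pos _
  rw [Real.exp_sub, le_div_iff₀ hcpos, mul_comm]
  exact le_trans hcc hprod

set_option maxHeartbeats 1000000 in
lemma tailB {I : Type*} [Fintype I] {T : ℕ} (f : I → ℝ) (hf01 : ∀ i, 0 ≤ f i ∧ f i ≤ 1)
    (C : Finset I) (hC : 1 ≤ ∑ i ∈ C, f i) :
    ∑ ω ∈ Finset.univ.filter (fun ω : (I × Fin T) → Bool =>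
        ∀ e : I × Fin T, e.1 ∈ C → ω e = false),
      ∏ e, (if ω e then f e.1 else 1 - f e.1)
      ≤ Real.exp (-(T:ℝ)) := by
  have hw : ∀ (e : I × Fin T) (b : Bool),
      (0:ℝ) ≤ (if b then f e.1 else 1 - f e.1) := by
    intro e b; cases b
    · simpa using by linarith [(hf01 e.1).2]
    · simpa using (hf01 e.1).1
  have hh : ∀ (e : I × Fin T) (b : Bool),
      (0:ℝ) ≤ (if e.1 ∈ C then (if b then (0:ℝ) else 1) else 1) := by
    intro e b
    by_cases hA : e.1 ∈ C
    · simp only [hA, if_true]; cases b <;> norm_num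
    · simp only [hA, if_false]; norm_num
  have hp : ∀ ω : (I × Fin T) → Bool,
      (∀ e : I × Fin T, e.1 ∈ C → ω e = false) →
      (1:ℝ) ≤ ∏ e, (if e.1 ∈ C then (if ω e then (0:ℝ) else 1) else 1) := by
    intro ω hω
    have : ∀ e : I × Fin T, (if e.1 ∈ C then (if ω e then (0:ℝ) else 1) else 1) = 1 := by
      intro e
      by_cases hA : e.1 ∈ C
      · simp [hA, hω e hA]
      · simp [hA]
    rw [Finset.prod_congr rfl (fun e _ => this e), Finset.prod_const_one]
  have hcc := chernoff_core
    (fun (e : I × Fin T) b => if b then f e.1 else 1 - f e.1)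
    (fun (e : I × Fin T) b => if e.1 ∈ C then (if b then (0:ℝ) else 1) else 1)
    hw hh
    (fun ω => ∀ e : I × Fin T, e.1 ∈ C → ω e = false)
    1 hp
  rw [one_mul] at hcc
  refine le_trans hcc ?_
  have hprod : (∏ e : I × Fin T,
      ((if (false : Bool) then f e.1 else 1 - f e.1) *
         (if e.1 ∈ C then (if (false : Bool) then (0:ℝ) else 1) else 1) +
       (if (true : Bool) then f e.1 else 1 - f e.1) *
         (if e.1 ∈ C then (if (true : Bool) then (0:ℝ) else 1) else 1)))
      ≤ Real.exp (-(T:ℝ)) := by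
    calc (∏ e : I × Fin T, _)
        ≤ ∏ e : I × Fin T, Real.exp (if e.1 ∈ C then -f e.1 else 0) := by
          apply Finset.prod_le_prod
          · intro e _
            have h1 := (hf01 e.1).1; have h2 := (hf01 e.1).2
            by_cases hA : e.1 ∈ C <;>
              simp only [hA, if_true, if_false, Bool.false_eq_true, mul_zero, mul_one] <;>
              nlinarith
          · intro e _
            have h1 := (hf01 e.1).1; have h2 := (hf01 e.1).2
            have he2 : -f e.1 + 1 ≤ Real.exp (-f e.1) := Real.add_one_le_exp _
            by_cases hA : e.1 ∈ C <;>
              simp only [hA, if_true, if_false, Bool.false_eq_true, mul_zero, mul_one,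
                Real.exp_zero] <;> nlinarith
      _ = Real.exp (∑ e : I × Fin T, if e.1 ∈ C then -f e.1 else 0) :=
          (Real.exp_sum _ _).symm
      _ ≤ Real.exp (-(T:ℝ)) := by
          apply Real.exp_le_exp.mpr
          have hsum : ∑ e : I × Fin T, (if e.1 ∈ C then -f e.1 else 0)
              = (T:ℝ) * (-(∑ i ∈ C, f i)) := by
            rw [← Finset.sum_filter, sum_prod_filter_fst C (fun e => -f e.1)]
            simp only [Finset.sum_const, Finset.card_univ, Fintype.card_fin, nsmul_eq_mul]
            rw [← Finset.mul_sum, ← Finset.sum_neg_distrib]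
          rw [hsum]
          have hT : (0:ℝ) ≤ (T:ℝ) := by positivity
          nlinarith
  exact hprod

lemma union_bound {Ω α : Type*} [Fintype Ω] [Fintype α] (μ : Ω → ℝ)
    (hμ : ∀ ω, 0 ≤ μ ω) (P : α → Ω → Prop) :
    ∑ ω ∈ Finset.univ.filter (fun ω => ∃ a, P a ω), μ ω ≤
      ∑ a, ∑ ω ∈ Finset.univ.filter (fun ω => P a ω), μ ω := by
  simp only [Finset.sum_filter]
  rw [Finset.sum_comm]
  apply Finset.sum_le_sum
  intro ω _
  split_ifs with hex
  · obtain ⟨a, ha⟩ := hex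
    calc μ ω = (if P a ω then μ ω else 0) := by simp [ha]
      _ ≤ ∑ a', (if P a' ω then μ ω else 0) := by
          apply Finset.single_le_sum (f := fun a' => if P a' ω then μ ω else 0) ?_ (Finset.mem_univ a)
          intro a' _
          split_ifs
          · exact hμ ω
          · exact le_rfl
  · refine Finset.sum_nonneg fun a' _ => ?_
    split_ifs
    · exact hμ ω
    · exact le_rfl

lemma log_five_ge : (5/4:ℝ) ≤ Real.log 5 := by
  have h1 : Real.exp 1 < 2.7182818286 := Real.exp_one_lt_d9
  have h0 : (0:ℝ) ≤ Real.exp 1 := (Real.exp_pos 1).le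
  rw [Real.le_log_iff_exp_le (by norm_num : (0:ℝ) < 5)]
  have h5 : Real.exp (5/4) ^ 4 ≤ (5:ℝ) ^ 4 := by
    have e1 : Real.exp (5/4) ^ 4 = Real.exp 1 ^ 5 := by
      rw [← Real.exp_nat_mul, ← Real.exp_nat_mul]; norm_num
    rw [e1]
    calc Real.exp 1 ^ 5 ≤ (2.7182818286:ℝ) ^ 5 := pow_le_pow_left₀ h0 h1.le 5
      _ ≤ (5:ℝ) ^ 4 := by norm_num
  exact le_of_pow_le_pow_left₀ (by norm_num) (by norm_num) h5

set_option maxHeartbeats 1600000 in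
/-- If a graph on `n ≥ 5` vertices has a fractional weak `r`-neighborhood cover
`(𝒳, f)` with degree `d` and spread `s`, then it has a (non-fractional) weak
`r`-neighborhood cover with degree `36 · ln n · d` and spread `s`, obtained as
a sub-multiset of `𝒳` (given by multiplicities `m : I → ℕ`). -/
theorem weakCover_of_fracWeakCover [Fintype V] (G : SimpleGraph V)
    (hn : 5 ≤ Fintype.card V) (r s : ℕ) (d : ℝ)
    {I : Type*} [Fintype I] (X : I → Set V) (f : I → ℝ)
    (h : IsFracWeakCover G r s d X f) :
    ∃ m : I → ℕ,
      -- the r-neighborhood of every vertex is contained in a chosen cluster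
      (∀ w : V, ∃ i, 1 ≤ m i ∧ ∀ x, inBall G w r x → x ∈ X i) ∧
      -- every vertex lies in at most 36 ln(n) d chosen clusters (with multiplicity)
      (∀ v : V, (∑ i ∈ Finset.univ.filter (fun i => v ∈ X i), (m i : ℝ)) ≤
        36 * Real.log (Fintype.card V) * d) := by
  obtain ⟨hf01, hspread, hcov, hdeg⟩ := h
  have hN5 : (5:ℝ) ≤ (Fintype.card V : ℝ) := by exact_mod_cast hn
  have hNpos : (0:ℝ) < (Fintype.card V : ℝ) := by linarith
  set L := Real.log (Fintype.card V) with hLdef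
  have hL : (5/4:ℝ) ≤ L := le_trans log_five_ge (Real.log_le_log (by norm_num) hN5)
  have hL0 : (0:ℝ) ≤ L := by linarith
  -- the cluster families
  set Av : V → Finset I := fun v => Finset.univ.filter (fun i => v ∈ X i) with hAv
  set Cv : V → Finset I := fun u =>
    Finset.univ.filter (fun i => ∀ x, inBall G u r x → x ∈ X i) with hCv
  have hCsubA : ∀ u : V, Cv u ⊆ Av u := by
    intro u i hi
    simp only [Cv, Av, Finset.mem_filter] at *
    exact ⟨hi.1, hi.2 u ⟨SimpleGraph.Walk.nil, by simp⟩⟩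
  have hd1 : (1:ℝ) ≤ d := by
    obtain ⟨v0⟩ : Nonempty V := Fintype.card_pos_iff.mp (by omega)
    calc (1:ℝ) ≤ ∑ i ∈ Cv v0, f i := hcov v0
      _ ≤ ∑ i ∈ Av v0, f i :=
          Finset.sum_le_sum_of_subset_of_nonneg (hCsubA v0) (fun i _ _ => (hf01 i).1)
      _ ≤ d := hdeg v0
  have hd0 : (0:ℝ) ≤ d := by linarith
  set T := ⌈(24:ℝ) * L⌉₊ with hTdef
  have hT1 : (24:ℝ) * L ≤ (T:ℝ) := Nat.le_ceil _
  have hT2 : (T:ℝ) ≤ 24 * L + 1 := le_of_lt (Nat.ceil_lt_add_one (by positivity))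
  -- key tail bounds for the two families of bad events
  have keyA : ∀ v : V,
      ∑ ω ∈ Finset.univ.filter (fun ω : (I × Fin T) → Bool =>
          36 * L * d < ∑ e ∈ Finset.univ.filter (fun e : I × Fin T => e.1 ∈ Av v),
            (if ω e then (1:ℝ) else 0)),
        ∏ e, (if ω e then f e.1 else 1 - f e.1) ≤ Real.exp (-2 * L) := by
    intro v
    refine le_trans (tailA f hf01 (Av v) d (36 * L * d) (hdeg v) hd0) ?_
    apply Real.exp_le_exp.mpr
    have key1 : (T:ℝ) * d ≤ (24 * L + 1) * d := mul_le_mul_of_nonneg_right hT2 hd0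
    nlinarith [mul_nonneg (sub_nonneg.mpr hd1) (sub_nonneg.mpr hL)]
  have keyB : ∀ u : V,
      ∑ ω ∈ Finset.univ.filter (fun ω : (I × Fin T) → Bool =>
          ∀ e : I × Fin T, e.1 ∈ Cv u → ω e = false),
        ∏ e, (if ω e then f e.1 else 1 - f e.1) ≤ Real.exp (-2 * L) := by
    intro u
    refine le_trans (tailB f hf01 (Cv u) (hcov u)) ?_
    apply Real.exp_le_exp.mpr
    nlinarith
  -- total mass is 1
  have hμ0 : ∀ ω : (I × Fin T) → Bool, 0 ≤ ∏ e, (if ω e then f e.1 else 1 - f e.1) := by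
    intro ω
    refine Finset.prod_nonneg fun e _ => ?_
    have h1 := (hf01 e.1).1; have h2 := (hf01 e.1).2
    split_ifs <;> linarith
  have hμ1 : ∑ ω : (I × Fin T) → Bool, ∏ e, (if ω e then f e.1 else 1 - f e.1) = 1 := by
    refine (sum_prod_bool (fun (e : I × Fin T) b => if b then f e.1 else 1 - f e.1)).trans ?_
    refine Finset.prod_eq_one fun e _ => ?_
    norm_num
  -- there is a good sample point
  have hgood : ∃ ω : (I × Fin T) → Bool,
      ¬ (∃ a : V ⊕ V, Sum.elim
          (fun v => 36 * L * d < ∑ e ∈ Finset.univ.filter (fun e : I × Fin T => e.1 ∈ Av v),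
            (if ω e then (1:ℝ) else 0))
          (fun u => ∀ e : I × Fin T, e.1 ∈ Cv u → ω e = false) a) := by
    by_contra hc
    push_neg at hc
    have hfull : Finset.univ.filter
        (fun ω : (I × Fin T) → Bool => ∃ a : V ⊕ V, Sum.elim
          (fun v => 36 * L * d < ∑ e ∈ Finset.univ.filter (fun e : I × Fin T => e.1 ∈ Av v),
            (if ω e then (1:ℝ) else 0))
          (fun u => ∀ e : I × Fin T, e.1 ∈ Cv u → ω e = false) a) = Finset.univ :=
      Finset.filter_true_of_mem (fun ω _ => hc ω)
    have hub := union_bound (fun ω : (I × Fin T) → Bool =>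
        ∏ e, (if ω e then f e.1 else 1 - f e.1)) hμ0
      (fun (a : V ⊕ V) ω => Sum.elim
          (fun v => 36 * L * d < ∑ e ∈ Finset.univ.filter (fun e : I × Fin T => e.1 ∈ Av v),
            (if ω e then (1:ℝ) else 0))
          (fun u => ∀ e : I × Fin T, e.1 ∈ Cv u → ω e = false) a)
    rw [hfull, hμ1] at hub
    have hsum : ∑ a : V ⊕ V, (Real.exp (-2 * L)) =
        2 * (Fintype.card V : ℝ) * Real.exp (-2 * L) := by
      rw [Finset.sum_const, Finset.card_univ, Fintype.card_sum, nsmul_eq_mul]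
      push_cast; ring
    have hbound : (1:ℝ) ≤ 2 * (Fintype.card V : ℝ) * Real.exp (-2 * L) := by
      refine le_trans hub ?_
      rw [← hsum]
      refine Finset.sum_le_sum fun a _ => ?_
      cases a with
      | inl v =>
          refine le_trans (le_of_eq ?_) (keyA v)
          refine Finset.sum_congr ?_ (fun _ _ => rfl)
          ext ω
          simp [Finset.mem_filter, Sum.elim_inl]
      | inr u =>
          refine le_trans (le_of_eq ?_) (keyB u)
          refine Finset.sum_congr ?_ (fun _ _ => rfl)
          ext ω
          simp [Finset.mem_filter, Sum.elim_inr]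
    -- but 2 n exp(-2 log n) = 2/n < 1
    have hexp : Real.exp (-2 * L) = ((Fintype.card V : ℝ) * (Fintype.card V : ℝ))⁻¹ := by
      rw [show (-2 : ℝ) * L = -(L + L) by ring, Real.exp_neg, Real.exp_add,
        hLdef, Real.exp_log hNpos]
    rw [hexp] at hbound
    have h2 : 2 * (Fintype.card V : ℝ) * ((Fintype.card V : ℝ) * (Fintype.card V : ℝ))⁻¹
        = 2 / (Fintype.card V : ℝ) := by
      field_simp
    rw [h2] at hbound
    rw [le_div_iff₀ hNpos, one_mul] at hbound
    linarith
  obtain ⟨ω, hω⟩ := hgood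
  push_neg at hω
  refine ⟨fun i => (Finset.univ.filter (fun t : Fin T => ω (i, t) = true)).card, ?_, ?_⟩
  · -- coverage
    intro u
    have hb := hω (Sum.inr u)
    simp only [Sum.elim_inr] at hb
    push_neg at hb
    obtain ⟨e, he1, he2⟩ := hb
    refine ⟨e.1, ?_, ?_⟩
    · refine Finset.card_pos.mpr ⟨e.2, ?_⟩
      simp only [Finset.mem_filter, Finset.mem_univ, true_and]
      rw [Prod.mk.eta]
      exact Bool.not_eq_false _ |>.mp he2
    · have := Finset.mem_filter.mp he1
      exact this.2
  · -- degree
    intro v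
    have hb := hω (Sum.inl v)
    simp only [Sum.elim_inl, not_lt] at hb
    calc ∑ i ∈ Finset.univ.filter (fun i => v ∈ X i),
          (((Finset.univ.filter (fun t : Fin T => ω (i, t) = true)).card : ℝ))
        = ∑ i ∈ Av v, ∑ t : Fin T, (if ω (i, t) then (1:ℝ) else 0) := by
          refine Finset.sum_congr rfl fun i _ => ?_
          rw [Finset.card_filter]
          push_cast
          rfl
      _ = ∑ e ∈ Finset.univ.filter (fun e : I × Fin T => e.1 ∈ Av v),
            (if ω e then (1:ℝ) else 0) :=
          (sum_prod_filter_fst (Av v) (fun e => if ω e then (1:ℝ) else 0)).symm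
      _ ≤ 36 * L * d := hb
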